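/- For a valleyless permutation π of length n with inversion table (a_1,...,a_n) where each a_k ∈ {0, n-k}, the number of inversions i(π) = sum_k a_k; consequently the multiset {i(π) : π valleyless of length n} coincides with the multiset of subset sums of {1, 2, ..., n-1}. -/

import Mathlib

/-- A permutation word `π 0, …, π (n-1)` is valleyless if no entry is strictly below
some earlier entry and some later entry. -/
def PermValleyless {n : ℕ} (π : Equiv.Perm (Fin n)) : Prop :=
  ∀ i j k : Fin n, i < j → j < k → min (π i) (π k) ≤ π j

/-- Inversion table entry (0-indexed symbol `k`): number of positions to the left of the
symbol `k` in the word holding a larger symbol.  In 1-indexed terms this is `a_{k+1}`. -/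
def invTable {n : ℕ} (π : Equiv.Perm (Fin n)) (k : Fin n) : ℕ :=
  (Finset.univ.filter (fun i : Fin n => i < π.symm k ∧ k < π i)).card

/-- The number of inversions of a permutation. -/
def invNum {n : ℕ} (π : Equiv.Perm (Fin n)) : ℕ :=
  (Finset.univ.filter (fun p : Fin n × Fin n => p.1 < p.2 ∧ π p.2 < π p.1)).card

/-- The set `S(π) = {n-k : a_k = n-k, 1 ≤ k ≤ n-1} ⊆ {1,…,n-1}` (in 0-indexed terms,
`n-k` becomes `n - 1 - k`). -/
def Sset {n : ℕ} (π : Equiv.Perm (Fin n)) : Finset ℕ :=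
  (Finset.univ.filter
      (fun k : Fin n => invTable π k = n - 1 - k.val ∧ 0 < n - 1 - k.val)).image
    (fun k : Fin n => n - 1 - k.val)

namespace ValleylessAux

variable {n : ℕ}

/-- The order in which symbols appear in the word of the unimodal permutation with
"descending set" `D`: symbols not in `D` in increasing order, then symbols in `D` in
decreasing order. -/
def prec (D : Finset (Fin n)) (k l : Fin n) : Prop :=
  (k ∉ D ∧ l ∉ D ∧ k < l) ∨ (k ∈ D ∧ l ∈ D ∧ l < k) ∨ (k ∉ D ∧ l ∈ D)

instance (D : Finset (Fin n)) (k l : Fin n) : Decidable (prec D k l) := by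
  unfold prec; infer_instance

lemma prec_irrefl (D : Finset (Fin n)) (k : Fin n) : ¬ prec D k k := by
  rintro (⟨_, _, h⟩ | ⟨_, _, h⟩ | ⟨h1, h2⟩) <;> simp_all [lt_irrefl]

lemma prec_trans {D : Finset (Fin n)} {i j k : Fin n}
    (hij : prec D i j) (hjk : prec D j k) : prec D i k := by
  rcases hij with ⟨h1, h2, h3⟩ | ⟨h1, h2, h3⟩ | ⟨h1, h2⟩ <;>
    rcases hjk with ⟨g1, g2, g3⟩ | ⟨g1, g2, g3⟩ | ⟨g1, g2⟩
  · exact Or.inl ⟨h1, g2, h3.trans g3⟩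
  · exact absurd g1 (by simpa using h2)
  · exact Or.inr (Or.inr ⟨h1, g2⟩)
  · exact absurd h2 (by simpa using g1)
  · exact Or.inr (Or.inl ⟨h1, g2, g3.trans h3⟩)
  · exact absurd h2 (by simpa using g1)
  · exact absurd h2 (by simpa using g1)
  · exact Or.inr (Or.inr ⟨h1, g2⟩)
  · exact absurd h2 (by simpa using g1)

lemma prec_trich {D : Finset (Fin n)} {k l : Fin n} (h : k ≠ l) :
    prec D k l ∨ prec D l k := by
  unfold prec
  rcases lt_or_gt_of_ne h with hlt | hlt <;>
    by_cases hk : k ∈ D <;> by_cases hl : l ∈ D <;> tauto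

/-- Number of symbols preceding `k` in the word order determined by `D`. -/
def cnt (D : Finset (Fin n)) (k : Fin n) : ℕ :=
  (Finset.univ.filter (fun j => prec D j k)).card

lemma cnt_lt (D : Finset (Fin n)) (k : Fin n) : cnt D k < n := by
  have hk : k ∉ Finset.univ.filter (fun j => prec D j k) := by
    simp only [Finset.mem_filter, Finset.mem_univ, true_and]
    exact prec_irrefl D k
  have hss : Finset.univ.filter (fun j => prec D j k) ⊂ Finset.univ :=
    (Finset.ssubset_iff_of_subset (Finset.filter_subset _ _)).mpr
      ⟨k, Finset.mem_univ k, hk⟩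
  have := Finset.card_lt_card hss
  simpa [cnt, Finset.card_univ] using this

lemma cnt_strictMono {D : Finset (Fin n)} {j k : Fin n} (h : prec D j k) :
    cnt D j < cnt D k := by
  apply Finset.card_lt_card
  constructor
  · intro i hi
    simp only [Finset.mem_filter, Finset.mem_univ, true_and] at hi ⊢
    exact prec_trans hi h
  · intro hsub
    have : j ∈ Finset.univ.filter (fun i => prec D i k) := by
      simp only [Finset.mem_filter, Finset.mem_univ, true_and]; exact h
    have := hsub this
    simp only [Finset.mem_filter, Finset.mem_univ, true_and] at this
    exact prec_irrefl D j this

/-- If the positions of a permutation are strictly monotone w.r.t. `prec D`, then the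
position of `k` equals `cnt D k`. -/
lemma pos_eq_cnt (π : Equiv.Perm (Fin n)) (D : Finset (Fin n))
    (h : ∀ k l : Fin n, prec D k l → π.symm k < π.symm l) (k : Fin n) :
    (π.symm k).val = cnt D k := by
  have hset : (Finset.univ.filter (fun j => prec D j k)) =
      (Finset.univ.filter (fun j : Fin n => π.symm j < π.symm k)) := by
    ext j
    simp only [Finset.mem_filter, Finset.mem_univ, true_and]
    constructor
    · exact h j k
    · intro hjk
      have hne : j ≠ k := by
        intro he; subst he; exact lt_irrefl _ hjk
      rcases prec_trich (D := D) hne with hp | hp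
      · exact hp
      · exact absurd (h k j hp) (by omega)
  have hcard : (Finset.univ.filter (fun j : Fin n => π.symm j < π.symm k)).card =
      (Finset.Iio (π.symm k)).card := by
    apply Finset.card_nbij' (fun j => π.symm j) (fun m => π m)
    · intro a ha
      simp only [Finset.mem_coe, Finset.mem_filter, Finset.mem_univ, true_and] at ha
      simpa using ha
    · intro a ha
      simp only [Finset.mem_coe, Finset.mem_Iio] at ha
      simp only [Finset.mem_coe, Finset.mem_filter, Finset.mem_univ, true_and, Equiv.symm_apply_apply]
      exact ha
    · intro a _; simp
    · intro a _; simp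
  rw [cnt, hset, hcard, Fin.card_Iio]

/-- Reindexing of `invTable` by symbols rather than positions. -/
lemma invTable_eq (π : Equiv.Perm (Fin n)) (k : Fin n) :
    invTable π k =
      (Finset.univ.filter (fun l : Fin n => π.symm l < π.symm k ∧ k < l)).card := by
  apply Finset.card_nbij' (fun i => π i) (fun l => π.symm l)
  · intro a ha
    simp only [Finset.mem_filter, Finset.mem_univ, true_and] at ha ⊢
    simpa using ha
  · intro a ha
    simp only [Finset.mem_filter, Finset.mem_univ, true_and] at ha ⊢
    simpa using ha
  · intro a _; simp
  · intro a _; simp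

lemma invTable_le (π : Equiv.Perm (Fin n)) (k : Fin n) :
    invTable π k ≤ n - 1 - k.val := by
  rw [invTable_eq]
  calc (Finset.univ.filter (fun l : Fin n => π.symm l < π.symm k ∧ k < l)).card
      ≤ (Finset.Ioi k).card := by
        apply Finset.card_le_card
        intro l hl
        simp only [Finset.mem_filter, Finset.mem_univ, true_and] at hl
        simpa using hl.2
    _ = n - 1 - k.val := Fin.card_Ioi k

/-- For a valleyless permutation, each inversion-table entry is `0` or maximal. -/
lemma invTable_zero_or_max {π : Equiv.Perm (Fin n)} (hv : PermValleyless π) (k : Fin n) :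
    invTable π k = 0 ∨ invTable π k = n - 1 - k.val := by
  by_contra hcon
  push_neg at hcon
  obtain ⟨h0, hmax⟩ := hcon
  rw [invTable_eq] at h0 hmax
  set T := Finset.univ.filter (fun l : Fin n => π.symm l < π.symm k ∧ k < l) with hT
  have hT1 : T.Nonempty := Finset.card_pos.mp (Nat.pos_of_ne_zero h0)
  obtain ⟨l₁, hl₁⟩ := hT1
  have hTsub : T ⊆ Finset.Ioi k := by
    intro l hl
    simp only [hT, Finset.mem_filter, Finset.mem_univ, true_and] at hl
    simpa using hl.2
  have hT2 : ∃ l₂ ∈ Finset.Ioi k, l₂ ∉ T := by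
    by_contra hc
    push_neg at hc
    have : Finset.Ioi k ⊆ T := hc
    have := Finset.card_le_card this
    rw [Fin.card_Ioi] at this
    have := Finset.card_le_card hTsub
    rw [Fin.card_Ioi] at this
    omega
  obtain ⟨l₂, hl₂Ioi, hl₂⟩ := hT2
  simp only [hT, Finset.mem_filter, Finset.mem_univ, true_and] at hl₁ hl₂
  simp only [Finset.mem_Ioi] at hl₂Ioi
  have hnlt : ¬ (π.symm l₂ < π.symm k) := fun h => hl₂ ⟨h, hl₂Ioi⟩
  have hne : π.symm k ≠ π.symm l₂ := by
    intro h
    have := π.symm.injective h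
    subst this
    exact lt_irrefl _ hl₂Ioi
  have hl₂' : π.symm k < π.symm l₂ := lt_of_le_of_ne (not_lt.mp hnlt) hne
  have := hv (π.symm l₁) (π.symm k) (π.symm l₂) hl₁.1 hl₂'
  simp only [Equiv.apply_symm_apply] at this
  have h1 : k < l₁ := hl₁.2
  rcases min_le_iff.mp this with h | h
  · exact absurd h (not_le.mpr h1)
  · exact absurd h (not_le.mpr hl₂Ioi)

/-- The "descending set" of a permutation: symbols (other than the maximum) whose
inversion-table entry is maximal. -/
def Dset (π : Equiv.Perm (Fin n)) : Finset (Fin n) :=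
  Finset.univ.filter
    (fun k : Fin n => invTable π k = n - 1 - k.val ∧ 0 < n - 1 - k.val)

lemma Sset_eq_image (π : Equiv.Perm (Fin n)) :
    Sset π = (Dset π).image (fun k : Fin n => n - 1 - k.val) := rfl

lemma mem_Dset {π : Equiv.Perm (Fin n)} {k : Fin n} (hk : k ∈ Dset π) :
    ∀ l : Fin n, k < l → π.symm l < π.symm k := by
  simp only [Dset, Finset.mem_filter, Finset.mem_univ, true_and] at hk
  obtain ⟨hmax, _⟩ := hk
  rw [invTable_eq] at hmax
  have hsub : (Finset.univ.filter (fun l : Fin n => π.symm l < π.symm k ∧ k < l)) ⊆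
      Finset.Ioi k := by
    intro l hl
    simp only [Finset.mem_filter, Finset.mem_univ, true_and] at hl
    simpa using hl.2
  have heq : (Finset.univ.filter (fun l : Fin n => π.symm l < π.symm k ∧ k < l)) =
      Finset.Ioi k := Finset.eq_of_subset_of_card_le hsub (by rw [Fin.card_Ioi, hmax])
  intro l hl
  have : l ∈ Finset.Ioi k := by simpa using hl
  rw [← heq] at this
  simp only [Finset.mem_filter, Finset.mem_univ, true_and] at this
  exact this.1

lemma not_mem_Dset {π : Equiv.Perm (Fin n)} (hv : PermValleyless π) {k : Fin n}
    (hk : k ∉ Dset π) : ∀ l : Fin n, k < l → π.symm k < π.symm l := by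
  intro l hl
  by_cases hkn : 0 < n - 1 - k.val
  · have hne : invTable π k ≠ n - 1 - k.val := by
      intro h
      have hmem : k ∈ Dset π := by
        simp only [Dset, Finset.mem_filter, Finset.mem_univ, true_and]
        exact ⟨h, hkn⟩
      exact hk hmem
    have h0 : invTable π k = 0 := (invTable_zero_or_max hv k).resolve_right hne
    rw [invTable_eq] at h0
    have hempty := Finset.card_eq_zero.mp h0
    have hnotmem : ¬ (π.symm l < π.symm k ∧ k < l) := by
      intro hc
      have : l ∈ Finset.univ.filter (fun l : Fin n => π.symm l < π.symm k ∧ k < l) := by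
        simp only [Finset.mem_filter, Finset.mem_univ, true_and]; exact hc
      rw [hempty] at this
      exact absurd this (Finset.notMem_empty l)
    have hnlt : ¬ (π.symm l < π.symm k) := fun h => hnotmem ⟨h, hl⟩
    have hne2 : π.symm k ≠ π.symm l := by
      intro h
      have := π.symm.injective h
      subst this
      exact lt_irrefl _ hl
    exact lt_of_le_of_ne (not_lt.mp hnlt) hne2
  · exfalso
    have h1 := k.isLt
    have h2 : l.val < n := l.isLt
    have : k.val < l.val := hl
    omega

/-- For valleyless `π`, positions are strictly monotone w.r.t. `prec (Dset π)`. -/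
lemma valleyless_pos_mono {π : Equiv.Perm (Fin n)} (hv : PermValleyless π) :
    ∀ k l : Fin n, prec (Dset π) k l → π.symm k < π.symm l := by
  intro k l h
  rcases h with ⟨h1, _, h3⟩ | ⟨_, h2, h3⟩ | ⟨h1, h2⟩
  · exact not_mem_Dset hv h1 l h3
  · exact mem_Dset h2 k h3
  · have hne : k ≠ l := fun he => h1 (he ▸ h2)
    rcases lt_or_gt_of_ne hne with hlt | hlt
    · exact not_mem_Dset hv h1 l hlt
    · exact mem_Dset h2 k hlt

/-- Master lemma: a valleyless permutation is determined by its descending set. -/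
lemma valleyless_pos_eq {π : Equiv.Perm (Fin n)} (hv : PermValleyless π) (k : Fin n) :
    (π.symm k).val = cnt (Dset π) k :=
  pos_eq_cnt π (Dset π) (valleyless_pos_mono hv) k

section Construction

variable (D : Finset (Fin n))

/-- The position function of the unimodal permutation with descending set `D`. -/
def posFun : Fin n → Fin n := fun k => ⟨cnt D k, cnt_lt D k⟩

lemma posFun_injective : Function.Injective (posFun D) := by
  intro k l h
  by_contra hne
  rcases prec_trich (D := D) hne with hp | hp
  · have h2 : (posFun D k).val < (posFun D l).val := cnt_strictMono hp
    rw [h] at h2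
    exact lt_irrefl _ h2
  · have h2 : (posFun D l).val < (posFun D k).val := cnt_strictMono hp
    rw [h] at h2
    exact lt_irrefl _ h2

/-- The unimodal permutation with descending set `D`. -/
noncomputable def sigma : Equiv.Perm (Fin n) :=
  (Equiv.ofBijective (posFun D) (Finite.injective_iff_bijective.mp (posFun_injective D))).symm

lemma sigma_symm_apply (k : Fin n) : (sigma D).symm k = posFun D k := rfl

lemma sigma_pos_mono {k l : Fin n} (h : prec D k l) :
    (sigma D).symm k < (sigma D).symm l := by
  have : (posFun D k).val < (posFun D l).val := cnt_strictMono h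
  rw [sigma_symm_apply, sigma_symm_apply]
  exact this

lemma sigma_pos_reflect {k l : Fin n} (h : (sigma D).symm k < (sigma D).symm l) :
    prec D k l := by
  have hne : k ≠ l := by
    intro he; subst he; exact lt_irrefl _ h
  rcases prec_trich (D := D) hne with hp | hp
  · exact hp
  · have := sigma_pos_mono D hp
    omega

lemma sigma_valleyless : PermValleyless (sigma D) := by
  intro i j k hij hjk
  by_contra hc
  push_neg at hc
  rcases lt_min_iff.mp hc with ⟨hba, hbc⟩
  set a := sigma D i with ha
  set b := sigma D j with hb
  set c := sigma D k with hcc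
  have hia : (sigma D).symm a = i := Equiv.symm_apply_apply _ i
  have hjb : (sigma D).symm b = j := Equiv.symm_apply_apply _ j
  have hkc : (sigma D).symm c = k := Equiv.symm_apply_apply _ k
  have hab : prec D a b := sigma_pos_reflect D (by rw [hia, hjb]; exact hij)
  have hbc' : prec D b c := sigma_pos_reflect D (by rw [hjb, hkc]; exact hjk)
  have hbD : b ∈ D := by
    rcases hab with ⟨_, _, h3⟩ | ⟨_, h2, _⟩ | ⟨_, h2⟩
    · exact absurd h3 (not_lt.mpr (le_of_lt hba))
    · exact h2
    · exact h2
  rcases hbc' with ⟨h1, _, _⟩ | ⟨_, _, h3⟩ | ⟨h1, _⟩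
  · exact h1 hbD
  · exact absurd h3 (not_lt.mpr (le_of_lt hbc))
  · exact h1 hbD

lemma sigma_invTable_mem {k : Fin n} (hk : k ∈ D) :
    invTable (sigma D) k = n - 1 - k.val := by
  rw [invTable_eq]
  have heq : (Finset.univ.filter
      (fun l : Fin n => (sigma D).symm l < (sigma D).symm k ∧ k < l)) =
      Finset.Ioi k := by
    ext l
    simp only [Finset.mem_filter, Finset.mem_univ, true_and, Finset.mem_Ioi]
    constructor
    · exact fun h => h.2
    · intro hkl
      refine ⟨sigma_pos_mono D ?_, hkl⟩
      by_cases hl : l ∈ D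
      · exact Or.inr (Or.inl ⟨hl, hk, hkl⟩)
      · exact Or.inr (Or.inr ⟨hl, hk⟩)
  rw [heq, Fin.card_Ioi]

lemma sigma_invTable_not_mem {k : Fin n} (hk : k ∉ D) :
    invTable (sigma D) k = 0 := by
  rw [invTable_eq, Finset.card_eq_zero, Finset.filter_eq_empty_iff]
  intro l _
  rintro ⟨hpos, hkl⟩
  have hp := sigma_pos_reflect D hpos
  rcases hp with ⟨_, _, h3⟩ | ⟨_, h2, _⟩ | ⟨_, h2⟩
  · exact absurd h3 (not_lt.mpr (le_of_lt hkl))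
  · exact hk h2
  · exact hk h2

end Construction

/-- Part 1: the inversion number is the sum of the inversion table. -/
lemma invNum_eq_sum (π : Equiv.Perm (Fin n)) :
    invNum π = ∑ k : Fin n, invTable π k := by
  rw [invNum]
  rw [Finset.card_eq_sum_card_fiberwise
    (f := fun p : Fin n × Fin n => π p.2) (t := Finset.univ)
    (fun _ _ => Finset.mem_univ _)]
  apply Finset.sum_congr rfl
  intro k _
  rw [invTable]
  apply Finset.card_nbij' (fun p : Fin n × Fin n => p.1)
    (fun i : Fin n => (i, π.symm k))
  · intro p hp
    simp only [Finset.mem_coe, Finset.mem_filter, Finset.mem_univ, true_and] at hp ⊢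
    obtain ⟨⟨h1, h2⟩, h3⟩ := hp
    have hp2 : p.2 = π.symm k := by rw [← h3]; simp
    exact ⟨by rw [← hp2]; exact h1, by rw [← h3]; exact h2⟩
  · intro i hi
    simp only [Finset.mem_coe, Finset.mem_filter, Finset.mem_univ, true_and] at hi ⊢
    exact ⟨⟨hi.1, by simpa using hi.2⟩, by simp⟩
  · intro p hp
    simp only [Finset.mem_coe, Finset.mem_filter, Finset.mem_univ, true_and] at hp
    have hp2 : p.2 = π.symm k := by rw [← hp.2]; simp
    exact Prod.ext rfl hp2.symm
  · intro i _
    rfl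

lemma sub_inj {k l : Fin n} (h : n - 1 - k.val = n - 1 - l.val) : k = l := by
  have hk := k.isLt
  have hl := l.isLt
  exact Fin.ext (by omega)

/-- For valleyless `π`, the inversion table is determined by `Dset π`. -/
lemma invTable_eq_ite {π : Equiv.Perm (Fin n)} (hv : PermValleyless π) (k : Fin n) :
    invTable π k = if k ∈ Dset π then n - 1 - k.val else 0 := by
  by_cases hk : k ∈ Dset π
  · simp only [hk, if_true]
    exact (Finset.mem_filter.mp hk).2.1
  · simp only [hk, if_false]
    rcases invTable_zero_or_max hv k with h | h
    · exact h
    · by_cases hkn : 0 < n - 1 - k.val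
      · exact absurd (by
          simp only [Dset, Finset.mem_filter, Finset.mem_univ, true_and]
          exact ⟨h, hkn⟩) hk
      · omega

/-- Recovering the descending set from `Sset`. -/
lemma mem_Dset_iff_Sset {π : Equiv.Perm (Fin n)} (k : Fin n) :
    k ∈ Dset π ↔ n - 1 - k.val ∈ Sset π := by
  constructor
  · intro hk
    rw [Sset_eq_image]
    exact Finset.mem_image_of_mem _ hk
  · intro hk
    rw [Sset_eq_image] at hk
    obtain ⟨k', hk', heq⟩ := Finset.mem_image.mp hk
    have : k' = k := sub_inj heq
    exact this ▸ hk'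

end ValleylessAux

theorem valleyless_inversions_subset_sums (n : ℕ) (hn : 1 ≤ n) :
    (∀ π : Equiv.Perm (Fin n), invNum π = ∑ k : Fin n, invTable π k) ∧
    Set.BijOn (fun π => Sset π) {π : Equiv.Perm (Fin n) | PermValleyless π}
      {S : Finset ℕ | S ⊆ Finset.Icc 1 (n - 1)} ∧
    (∀ π : Equiv.Perm (Fin n), PermValleyless π → invNum π = (Sset π).sum id) := by
  open ValleylessAux in
  refine ⟨invNum_eq_sum, ⟨?_, ?_, ?_⟩, ?_⟩
  · -- MapsTo
    intro π _
    simp only [Set.mem_setOf_eq]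
    intro s hs
    rw [Sset_eq_image] at hs
    obtain ⟨k, hk, heq⟩ := Finset.mem_image.mp hs
    simp only [Dset, Finset.mem_filter, Finset.mem_univ, true_and] at hk
    simp only [Finset.mem_Icc]
    omega
  · -- InjOn
    intro π hπ π' hπ' hS
    simp only [Set.mem_setOf_eq] at hπ hπ'
    have hS' : Sset π = Sset π' := hS
    have hD : Dset π = Dset π' := by
      ext k
      rw [mem_Dset_iff_Sset, mem_Dset_iff_Sset, hS']
    have hsymm : π.symm = π'.symm := by
      ext k
      rw [valleyless_pos_eq hπ k, valleyless_pos_eq hπ' k, hD]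
    have : π.symm.symm = π'.symm.symm := by rw [hsymm]
    simpa using this
  · -- SurjOn
    intro S hS
    simp only [Set.mem_setOf_eq] at hS
    set D : Finset (Fin n) :=
      Finset.univ.filter (fun k : Fin n => n - 1 - k.val ∈ S) with hDdef
    refine ⟨sigma D, sigma_valleyless D, ?_⟩
    have hDmem : ∀ k : Fin n, k ∈ D ↔ n - 1 - k.val ∈ S := by
      intro k
      simp [hDdef]
    have hfil : (Finset.univ.filter
        (fun k : Fin n => invTable (sigma D) k = n - 1 - k.val ∧ 0 < n - 1 - k.val)) = D := by
      ext k
      simp only [Finset.mem_filter, Finset.mem_univ, true_and]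
      constructor
      · rintro ⟨h1, h2⟩
        by_contra hk
        rw [sigma_invTable_not_mem D hk] at h1
        omega
      · intro hk
        have hmem := (hDmem k).mp hk
        have hIcc := hS hmem
        simp only [Finset.mem_Icc] at hIcc
        exact ⟨sigma_invTable_mem D hk, by omega⟩
    show Sset (sigma D) = S
    rw [Sset, hfil]
    ext s
    simp only [Finset.mem_image]
    constructor
    · rintro ⟨k, hk, rfl⟩
      exact (hDmem k).mp hk
    · intro hs
      have hIcc := hS hs
      simp only [Finset.mem_Icc] at hIcc
      refine ⟨⟨n - 1 - s, by omega⟩, ?_, by simp; omega⟩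
      rw [hDmem]
      simp only []
      have : n - 1 - (n - 1 - s) = s := by omega
      rw [this]
      exact hs
  · -- Part 3
    intro π hπ
    rw [invNum_eq_sum]
    have h1 : ∑ k : Fin n, invTable π k = ∑ k ∈ Dset π, (n - 1 - k.val) := by
      rw [Finset.sum_congr rfl (fun k _ => invTable_eq_ite hπ k)]
      rw [Finset.sum_ite_mem]
      simp [Finset.univ_inter]
    rw [h1, Sset_eq_image]
    rw [Finset.sum_image (fun k _ l _ h => sub_inj h)]
    rfl
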